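/- Consider the epistemic space E¹ = ⟨𝓔₁, mod⟩ and define the belief change operator ÷ for E¹ by: Ψ ÷ A = Ψ_⊤ if mod(Ψ) ⊆ A and A ≠ Ω₁, and Ψ ÷ A = Ψ otherwise. Then ÷ is a linear contraction operator for E¹, witnessed by the linear order ≪ on Ω₁ with ω₁ ≪ ω₂. -/
import Mathlib


open Set

/-- `minSet r S` is the set of `r`-minimal elements of `S`:
`min(S, r) = {ω ∈ S : r ω ω' for all ω' ∈ S}`. -/
def minSet {Ω : Type*} (r : Ω → Ω → Prop) (S : Set Ω) : Set Ω :=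
  {ω ∈ S | ∀ ω' ∈ S, r ω ω'}

/-- A linear order as a relation: total, antisymmetric and transitive. -/
def IsLinRel {Ω : Type*} (r : Ω → Ω → Prop) : Prop :=
  (∀ a b, r a b ∨ r b a) ∧ (∀ a b, r a b → r b a → a = b) ∧
    (∀ a b c, r a b → r b c → r a c)

/-- AGM contraction operator for the epistemic space `⟨E, md⟩` (postulates C1–C7,
formulated on model sets). -/
def IsContraction {Ω E : Type*} (md : E → Set Ω) (c : E → Set Ω → E) : Prop :=
  ∀ (Ψ : E) (A B : Set Ω),
    md Ψ ⊆ md (c Ψ A) ∧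
    (¬ md Ψ ⊆ A → md (c Ψ A) ⊆ md Ψ) ∧
    (A ≠ Set.univ → ¬ md (c Ψ A) ⊆ A) ∧
    md (c Ψ A) ∩ A ⊆ md Ψ ∧
    md (c Ψ (A ∩ B)) ⊆ md (c Ψ A) ∪ md (c Ψ B) ∧
    (¬ md (c Ψ (A ∩ B)) ⊆ B → md (c Ψ B) ⊆ md (c Ψ (A ∩ B)))

/-- AGM revision operator for the epistemic space `⟨E, md⟩` (postulates R1–R6,
formulated on model sets). -/
def IsRevision {Ω E : Type*} (md : E → Set Ω) (s : E → Set Ω → E) : Prop :=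
  ∀ (Ψ : E) (A B : Set Ω),
    md (s Ψ A) ⊆ A ∧
    (md Ψ ∩ A ≠ ∅ → md (s Ψ A) = md Ψ ∩ A) ∧
    (A ≠ ∅ → md (s Ψ A) ≠ ∅) ∧
    md (s Ψ A) ∩ B ⊆ md (s Ψ (A ∩ B)) ∧
    (md (s Ψ A) ∩ B ≠ ∅ → md (s Ψ (A ∩ B)) ⊆ md (s Ψ A) ∩ B)

/-- Postulate (ZC). -/
def ZC {Ω E : Type*} (md : E → Set Ω) : Prop :=
  ∀ (Ψ : E) (M : Set Ω), md Ψ ⊆ M → ∃ Ψ' : E, md Ψ' = M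

/-- Postulate (ZR1). -/
def ZR1 {Ω E : Type*} (md : E → Set Ω) : Prop :=
  ∀ ω : Ω, ∃ Ψ : E, md Ψ = {ω}

/-- Postulate (ZR2). -/
def ZR2 {Ω E : Type*} (md : E → Set Ω) : Prop :=
  ∀ (Ψ : E) (M : Set Ω), M ⊆ md Ψ → ∃ Ψ' : E, md Ψ' = M

/-- Postulate (Unbiased). -/
def Unbiased {Ω E : Type*} (md : E → Set Ω) : Prop :=
  ∀ M : Set Ω, ∃ Ψ : E, md Ψ = M

/-- Maxichoice contraction operator. -/
def IsMaxichoiceContraction {Ω E : Type*} (md : E → Set Ω) (c : E → Set Ω → E) : Prop :=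
  IsContraction md c ∧
    ∀ Ψ : E, ∃ r : Ω → Ω → Prop, IsLinRel r ∧ ∀ A : Set Ω,
      (¬ md Ψ ⊆ A → md (c Ψ A) = md Ψ) ∧
      (md Ψ ⊆ A → md (c Ψ A) = md Ψ ∪ minSet r Aᶜ)

/-- Linear contraction operator: a maxichoice contraction operator based on one
single linear order for all epistemic states. -/
def IsLinearContraction {Ω E : Type*} (md : E → Set Ω) (c : E → Set Ω → E) : Prop :=
  IsContraction md c ∧
    ∃ r : Ω → Ω → Prop, IsLinRel r ∧ ∀ (Ψ : E) (A : Set Ω),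
      (¬ md Ψ ⊆ A → md (c Ψ A) = md Ψ) ∧
      (md Ψ ⊆ A → md (c Ψ A) = md Ψ ∪ minSet r Aᶜ)

/-- Full meet contraction operator. -/
def IsFullMeetContraction {Ω E : Type*} (md : E → Set Ω) (c : E → Set Ω → E) : Prop :=
  IsContraction md c ∧
    ∀ (Ψ : E) (A : Set Ω),
      (¬ md Ψ ⊆ A → md (c Ψ A) = md Ψ) ∧
      (md Ψ ⊆ A → md (c Ψ A) = md Ψ ∪ Aᶜ)

/-- Maxichoice revision operator. -/
def IsMaxichoiceRevision {Ω E : Type*} (md : E → Set Ω) (s : E → Set Ω → E) : Prop :=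
  IsRevision md s ∧
    ∀ Ψ : E, ∃ r : Ω → Ω → Prop, IsLinRel r ∧ ∀ A : Set Ω,
      (md Ψ ∩ A ≠ ∅ → md (s Ψ A) = md Ψ ∩ A) ∧
      (md Ψ ∩ A = ∅ → md (s Ψ A) = minSet r A)

/-- Linear revision operator: a maxichoice revision operator based on one single
linear order for all epistemic states. -/
def IsLinearRevision {Ω E : Type*} (md : E → Set Ω) (s : E → Set Ω → E) : Prop :=
  IsRevision md s ∧
    ∃ r : Ω → Ω → Prop, IsLinRel r ∧ ∀ (Ψ : E) (A : Set Ω),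
      (md Ψ ∩ A ≠ ∅ → md (s Ψ A) = md Ψ ∩ A) ∧
      (md Ψ ∩ A = ∅ → md (s Ψ A) = minSet r A)

/-- Full meet revision operator. -/
def IsFullMeetRevision {Ω E : Type*} (md : E → Set Ω) (s : E → Set Ω → E) : Prop :=
  IsRevision md s ∧
    ∀ (Ψ : E) (A : Set Ω),
      (md Ψ ∩ A ≠ ∅ → md (s Ψ A) = md Ψ ∩ A) ∧
      (md Ψ ∩ A = ∅ → md (s Ψ A) = A)


/-- The epistemic space `E¹` over `Ω₁ = Fin 2` (worlds `ω₁, ω₂`): three states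
`Ψ₁, Ψ₂, Ψ_⊤` with `mod Ψ₁ = {ω₁}`, `mod Ψ₂ = {ω₂}` and `mod Ψ_⊤ = Ω₁`. -/
def md1 : Fin 3 → Set (Fin 2) := ![{0}, {1}, Set.univ]

open Classical in
/-- The belief change operator `÷` for `E¹`: `Ψ ÷ A = Ψ_⊤` if `mod Ψ ⊆ A` and
`A ≠ Ω₁`, and `Ψ ÷ A = Ψ` otherwise. -/
noncomputable def div1 : Fin 3 → Set (Fin 2) → Fin 3 :=
  fun Ψ A => if md1 Ψ ⊆ A ∧ A ≠ Set.univ then 2 else Ψ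

lemma setfin2 (A : Set (Fin 2)) : A = ∅ ∨ A = {0} ∨ A = {1} ∨ A = Set.univ := by
  by_cases h0 : (0:Fin 2) ∈ A <;> by_cases h1 : (1:Fin 2) ∈ A
  · right; right; right; ext x; fin_cases x <;> simp_all
  · right; left; ext x; fin_cases x <;> simp_all
  · right; right; left; ext x; fin_cases x <;> simp_all
  · left; ext x; fin_cases x <;> simp_all

/-- `div1` is a linear contraction operator for `E¹`, witnessed
by the linear order `≪` on `Ω₁` with `ω₁ ≪ ω₂` (i.e. `≤` on `Fin 2`). -/
theorem div1_linearContraction :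
    IsContraction md1 div1 ∧
      IsLinRel (fun x y : Fin 2 => x ≤ y) ∧
      ∀ (Ψ : Fin 3) (A : Set (Fin 2)),
        (¬ md1 Ψ ⊆ A → md1 (div1 Ψ A) = md1 Ψ) ∧
        (md1 Ψ ⊆ A →
          md1 (div1 Ψ A) = md1 Ψ ∪ minSet (fun x y : Fin 2 => x ≤ y) Aᶜ) := by
  refine ⟨?_, ⟨fun a b => le_total a b, fun a b => le_antisymm,
      fun a b c => le_trans⟩, ?_⟩
  · intro Ψ A B
    rcases setfin2 A with h | h | h | h <;> subst h <;>
    rcases setfin2 B with h | h | h | h <;> subst h <;> fin_cases Ψ <;>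
      refine ⟨?_, ?_, ?_, ?_, ?_, ?_⟩ <;>
      simp_all [div1, md1, Set.ext_iff, Set.subset_def, Fin.forall_fin_two,
        Fin.exists_fin_two]
  · intro Ψ A
    rcases setfin2 A with h | h | h | h <;> subst h <;> fin_cases Ψ <;>
      constructor <;> intro hh <;>
      simp_all [div1, md1, minSet, Set.ext_iff, Set.subset_def, Fin.forall_fin_two]
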